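/- Fix t > 0 and consider the curve in ℝ² parametrized by r > 0 given by X(r) = −3/(2t) + r²/(4t²) − 1 and Y(r) = (r/(2t) + Z(r))², where Z(r) = coth r − 1/r. Then Y is a concave function of X; i.e., d²Y/dX² ≤ 0 for all r > 0. -/

import Mathlib

noncomputable def Z : ℝ → ℝ := fun r => Real.cosh r / Real.sinh r - 1 / r

/-- `Y` as a function of `X`, where `X(r) = -3/(2t) + r²/(4t²) - 1` and
`Y(r) = (r/(2t) + Z(r))²`; inverting, `r = 2t√(X + 3/(2t) + 1)`. -/
noncomputable def YofX (t : ℝ) : ℝ → ℝ := fun X =>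
  (Real.sqrt (X + 3 / (2 * t) + 1) + Z (2 * t * Real.sqrt (X + 3 / (2 * t) + 1))) ^ 2


open Real


lemma nonneg_of_hasDerivAt (g g' : ℝ → ℝ) (hd : ∀ x, HasDerivAt g (g' x) x)
    (h0 : g 0 = 0) (hge : ∀ x, 0 ≤ x → 0 ≤ g' x) {r : ℝ} (hr : 0 ≤ r) : 0 ≤ g r := by
  have hmono : MonotoneOn g (Set.Ici 0) := by
    refine monotoneOn_of_deriv_nonneg (convex_Ici 0) ?_ ?_ ?_
    · exact fun x _ => ((hd x).differentiableAt.continuousAt).continuousWithinAt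
    · exact fun x _ => ((hd x).differentiableAt.differentiableWithinAt)
    · intro x hx
      rw [interior_Ici] at hx
      rw [(hd x).deriv]
      exact hge x (le_of_lt hx)
  have := hmono Set.self_mem_Ici hr hr
  simpa [h0] using this

lemma L1 {r : ℝ} (hr : 0 ≤ r) : Real.sinh r ≤ r * Real.cosh r := by
  have key : 0 ≤ r * Real.cosh r - Real.sinh r := by
    refine nonneg_of_hasDerivAt (fun x => x * Real.cosh x - Real.sinh x)
      (fun x => x * Real.sinh x) (fun x => ?_) (by simp)
      (fun x hx => mul_nonneg hx (Real.sinh_nonneg_iff.mpr hx)) hr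
    have h1 : HasDerivAt (fun x : ℝ => x * Real.cosh x) (1 * Real.cosh x + x * Real.sinh x) x :=
      (hasDerivAt_id x).fun_mul (Real.hasDerivAt_cosh x)
    have h2 := h1.fun_sub (Real.hasDerivAt_sinh x)
    refine h2.congr_deriv (Eq.symm ?_)
    ring
  linarith

lemma L2 {r : ℝ} (hr : 0 ≤ r) : 1 + r^2/2 ≤ Real.cosh r := by
  have key : 0 ≤ Real.cosh r - 1 - r^2/2 := by
    refine nonneg_of_hasDerivAt (fun x => Real.cosh x - 1 - x^2/2)
      (fun x => Real.sinh x - x) (fun x => ?_) (by simp)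
      (fun x hx => by simpa using Real.self_le_sinh_iff.mpr hx) hr
    have h2 := ((Real.hasDerivAt_cosh x).fun_sub (hasDerivAt_const x 1)).fun_sub
      ((hasDerivAt_pow 2 x).div_const 2)
    refine h2.congr_deriv (Eq.symm ?_)
    norm_num
  linarith

lemma L3 {r : ℝ} (hr : 0 ≤ r) : r + r^3/6 ≤ Real.sinh r := by

  have key : 0 ≤ Real.sinh r - r - r^3/6 := by
    refine nonneg_of_hasDerivAt (fun x => Real.sinh x - x - x^3/6)
      (fun x => Real.cosh x - 1 - x^2/2) (fun x => ?_) (by simp)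
      (fun x hx => by linarith [L2 hx]) hr
    have h2 := ((Real.hasDerivAt_sinh x).fun_sub (hasDerivAt_id x)).fun_sub ((hasDerivAt_pow 3 x).div_const 6)
    refine h2.congr_deriv (Eq.symm ?_)
    norm_num
    ring
  linarith

lemma L4 {r : ℝ} (hr : 0 ≤ r) : (r - r^3/3) * Real.cosh r ≤ Real.sinh r := by
  have key : 0 ≤ Real.sinh r - (r - r^3/3) * Real.cosh r := by
    refine nonneg_of_hasDerivAt (fun x => Real.sinh x - (x - x^3/3) * Real.cosh x)
      (fun x => x^2 * Real.cosh x - (x - x^3/3) * Real.sinh x) (fun x => ?_) (by simp)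
      (fun x hx => ?_) hr
    · have ha := (hasDerivAt_id x).fun_sub ((hasDerivAt_pow 3 x).div_const 3)
      have hd1 := ha.fun_mul (Real.hasDerivAt_cosh x)
      have h2 := (Real.hasDerivAt_sinh x).fun_sub hd1
      refine h2.congr_deriv (Eq.symm ?_)
      norm_num
      ring
    · have h1 := L1 hx
      have hs := Real.sinh_nonneg_iff.mpr hx
      nlinarith [mul_le_mul_of_nonneg_left h1 hx, mul_nonneg (pow_nonneg hx 3) hs]
  linarith

lemma ineqA {r : ℝ} (hr : 0 ≤ r) :
    2*r^2*Real.cosh r ≤ r*Real.sinh r + Real.cosh r * Real.sinh r^2 := by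
  have h3 := L3 hr
  have h4 := L4 hr
  have hs := Real.sinh_nonneg_iff.mpr hr
  have hc := Real.cosh_pos (x := r)
  have hs2 : r^2 + r^4/3 ≤ Real.sinh r^2 := by
    have h := pow_le_pow_left₀ (by positivity : (0:ℝ) ≤ r + r^3/6) h3 2
    nlinarith [h, pow_nonneg hr 6]
  nlinarith [mul_le_mul_of_nonneg_left hs2 hc.le, mul_le_mul_of_nonneg_left h4 hr]


lemma ineqF {r : ℝ} (hr : 0 ≤ r) :
    2*Real.sinh r^2 ≤ r*Real.cosh r*Real.sinh r + r^2 := by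
  have hF1 : ∀ x : ℝ, 0 ≤ x →
      0 ≤ x*(Real.sinh x^2 + Real.cosh x^2) + 2*x - 3*Real.sinh x*Real.cosh x := by
    intro x hx
    refine nonneg_of_hasDerivAt
      (fun x => x*(Real.sinh x^2 + Real.cosh x^2) + 2*x - 3*Real.sinh x*Real.cosh x)
      (fun x => 2 + 4*x*Real.sinh x*Real.cosh x - 2*Real.cosh x^2 - 2*Real.sinh x^2)
      (fun y => ?_) (by simp) (fun y hy => ?_) hx
    · have hs := Real.hasDerivAt_sinh y
      have hc := Real.hasDerivAt_cosh y
      have h1 := (hasDerivAt_id y).fun_mul ((hs.fun_pow 2).fun_add (hc.fun_pow 2))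
      have h2 := ((hs.const_mul (3:ℝ)).fun_mul hc)
      have h := (h1.fun_add ((hasDerivAt_id y).const_mul (2:ℝ))).fun_sub h2
      refine h.congr_deriv (Eq.symm ?_)
      simp only [id_eq]
      push_cast
      ring
    · have h1 := L1 hy
      have hs := Real.sinh_nonneg_iff.mpr hy
      have hsq := Real.cosh_sq y
      nlinarith [mul_nonneg hs (sub_nonneg.mpr h1)]
  have key : 0 ≤ r*Real.cosh r*Real.sinh r + r^2 - 2*Real.sinh r^2 := by
    refine nonneg_of_hasDerivAt
      (fun x => x*Real.cosh x*Real.sinh x + x^2 - 2*Real.sinh x^2)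
      (fun x => x*(Real.sinh x^2 + Real.cosh x^2) + 2*x - 3*Real.sinh x*Real.cosh x)
      (fun y => ?_) (by simp) hF1 hr
    have hs := Real.hasDerivAt_sinh y
    have hc := Real.hasDerivAt_cosh y
    have h1 := ((hasDerivAt_id y).fun_mul hc).fun_mul hs
    have h2 := (h1.fun_add (hasDerivAt_pow 2 y)).fun_sub ((hs.fun_pow 2).const_mul (2:ℝ))
    refine h2.congr_deriv (Eq.symm ?_)
    simp only [id_eq]
    push_cast; ring
  linarith

lemma ineqV {r : ℝ} (hr : 0 ≤ r) : r^3*Real.cosh r ≤ Real.sinh r^3 := by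
  -- W1 = derivative of W; W1d = derivative of W1
  have hW1 : ∀ x : ℝ, 0 ≤ x →
      0 ≤ 3*Real.sinh x^3 + 6*Real.sinh x*Real.cosh x^2 - 6*x^2*Real.sinh x
          - 6*x*Real.cosh x - x^3*Real.cosh x := by
    intro x hx
    refine nonneg_of_hasDerivAt
      (fun x => 3*Real.sinh x^3 + 6*Real.sinh x*Real.cosh x^2 - 6*x^2*Real.sinh x
          - 6*x*Real.cosh x - x^3*Real.cosh x)
      (fun x => 21*Real.sinh x^2*Real.cosh x + 6*Real.cosh x^3 - 6*Real.cosh x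
          - 18*x*Real.sinh x - 9*x^2*Real.cosh x - x^3*Real.sinh x)
      (fun y => ?_) (by simp) (fun y hy => ?_) hx
    · have hs := Real.hasDerivAt_sinh y
      have hc := Real.hasDerivAt_cosh y
      have h1 := (hs.fun_pow 3).const_mul (3:ℝ)
      have h2 := ((hs.const_mul (6:ℝ)).fun_mul (hc.fun_pow 2))
      have h3 := ((hasDerivAt_pow 2 y).const_mul (6:ℝ)).fun_mul hs
      have h4 := ((hasDerivAt_id y).const_mul (6:ℝ)).fun_mul hc
      have h5 := (hasDerivAt_pow 3 y).fun_mul hc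
      have h := (((h1.fun_add h2).fun_sub h3).fun_sub h4).fun_sub h5
      refine h.congr_deriv (Eq.symm ?_)
      simp only [id_eq]
      push_cast
      ring
    · have hsx := Real.self_le_sinh_iff.mpr hy
      have hc2 := L2 hy
      have hs := Real.sinh_nonneg_iff.mpr hy
      have hcp := Real.cosh_pos (x := y)
      have hsq := Real.cosh_sq y
      have hc3 : 6*Real.cosh y^3 - 6*Real.cosh y = 6*Real.cosh y*Real.sinh y^2 := by
        linear_combination 6*Real.cosh y*hsq
      have hp1 : y*(1+y^2/2) ≤ Real.sinh y*Real.cosh y :=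
        mul_le_mul hsx hc2 (by positivity) hs
      have hp2 := mul_le_mul_of_nonneg_left hp1 (mul_nonneg (by norm_num : (0:ℝ) ≤ 18) hs)
      have hp3 : y^2*Real.cosh y ≤ Real.sinh y^2*Real.cosh y := by
        have : y^2 ≤ Real.sinh y^2 := by nlinarith
        exact mul_le_mul_of_nonneg_right this hcp.le
      nlinarith [mul_nonneg (mul_nonneg (mul_nonneg hx hx) hx) hs]
  have hW : ∀ x : ℝ, 0 ≤ x →
      0 ≤ 3*Real.sinh x^2*Real.cosh x - 3*x^2*Real.cosh x - x^3*Real.sinh x := by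
    intro x hx
    refine nonneg_of_hasDerivAt
      (fun x => 3*Real.sinh x^2*Real.cosh x - 3*x^2*Real.cosh x - x^3*Real.sinh x)
      (fun x => 3*Real.sinh x^3 + 6*Real.sinh x*Real.cosh x^2 - 6*x^2*Real.sinh x
          - 6*x*Real.cosh x - x^3*Real.cosh x)
      (fun y => ?_) (by simp) hW1 hx
    have hs := Real.hasDerivAt_sinh y
    have hc := Real.hasDerivAt_cosh y
    have h1 := ((hs.fun_pow 2).const_mul (3:ℝ)).fun_mul hc
    have h2 := ((hasDerivAt_pow 2 y).const_mul (3:ℝ)).fun_mul hc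
    have h3 := (hasDerivAt_pow 3 y).fun_mul hs
    have h := (h1.fun_sub h2).fun_sub h3
    refine h.congr_deriv (Eq.symm ?_)
    push_cast
    ring
  have key : 0 ≤ Real.sinh r^3 - r^3*Real.cosh r := by
    refine nonneg_of_hasDerivAt
      (fun x => Real.sinh x^3 - x^3*Real.cosh x)
      (fun x => 3*Real.sinh x^2*Real.cosh x - 3*x^2*Real.cosh x - x^3*Real.sinh x)
      (fun y => ?_) (by simp) hW hr
    have hs := Real.hasDerivAt_sinh y
    have hc := Real.hasDerivAt_cosh y
    have h := (hs.fun_pow 3).fun_sub ((hasDerivAt_pow 3 y).fun_mul hc)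
    refine h.congr_deriv (Eq.symm ?_)
    push_cast
    ring
  linarith



noncomputable def Zd : ℝ → ℝ := fun x => 1/x^2 - 1/Real.sinh x^2
noncomputable def Zd2 : ℝ → ℝ := fun x => -2/x^3 + 2*Real.cosh x/Real.sinh x^3

lemma hasDerivAt_Z {x : ℝ} (hx : x ≠ 0) : HasDerivAt Z (Zd x) x := by
  have hs : Real.sinh x ≠ 0 := Real.sinh_ne_zero.mpr hx
  have h1 := (Real.hasDerivAt_cosh x).div (Real.hasDerivAt_sinh x) hs
  have h2 : HasDerivAt (fun y : ℝ => 1 / y) (-(1/x^2)) x := by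
    simpa [one_div] using hasDerivAt_inv hx
  have h := h1.fun_sub h2
  refine h.congr_deriv (Eq.symm ?_)
  have hsq := Real.cosh_sq x
  simp only [Zd]
  field_simp
  ring_nf
  rw [hsq]
  ring

lemma hasDerivAt_Zd {x : ℝ} (hx : x ≠ 0) : HasDerivAt Zd (Zd2 x) x := by
  have hs : Real.sinh x ≠ 0 := Real.sinh_ne_zero.mpr hx
  have h1 : HasDerivAt (fun y : ℝ => 1/y^2) (-(2*x)/(x^2)^2) x := by
    have hp : HasDerivAt (fun y : ℝ => y^2) (2*x) x := by simpa using hasDerivAt_pow 2 x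
    simpa [one_div] using hp.fun_inv (pow_ne_zero 2 hx)
  have h2 : HasDerivAt (fun y : ℝ => 1/Real.sinh y^2)
      (-(2*Real.sinh x*Real.cosh x)/(Real.sinh x^2)^2) x := by
    have hp : HasDerivAt (fun y : ℝ => Real.sinh y^2) (2*Real.sinh x*Real.cosh x) x := by
      simpa using (Real.hasDerivAt_sinh x).fun_pow 2
    simpa [one_div] using hp.fun_inv (pow_ne_zero 2 hs)
  have h := h1.fun_sub h2
  refine h.congr_deriv (Eq.symm ?_)
  simp only [Zd2]
  field_simp
  ring

lemma lemA {r : ℝ} (hr : 0 < r) : r^2*Zd2 r + r*Zd r - Z r ≤ 0 := by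
  have hs : 0 < Real.sinh r := Real.sinh_pos_iff.mpr hr
  have heq : r^2*Zd2 r + r*Zd r - Z r =
      (2*r^2*Real.cosh r - r*Real.sinh r - Real.cosh r*Real.sinh r^2)/Real.sinh r^3 := by
    simp only [Zd2, Zd, Z]
    field_simp
    ring
  rw [heq]
  apply div_nonpos_of_nonpos_of_nonneg
  · linarith [ineqA hr.le]
  · positivity

lemma Zge (r : ℝ) (hr : 0 < r) : 0 ≤ Z r := by
  have hs : 0 < Real.sinh r := Real.sinh_pos_iff.mpr hr
  have heq : Z r = (r*Real.cosh r - Real.sinh r)/(r*Real.sinh r) := by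
    simp only [Z]; field_simp
  rw [heq]
  apply div_nonneg _ (by positivity)
  linarith [L1 hr.le]

lemma Zdge (r : ℝ) (hr : 0 < r) : 0 ≤ Zd r := by
  have hs : 0 < Real.sinh r := Real.sinh_pos_iff.mpr hr
  have hrs : r ≤ Real.sinh r := Real.self_le_sinh_iff.mpr hr.le
  have heq : Zd r = (Real.sinh r^2 - r^2)/(r^2*Real.sinh r^2) := by
    simp only [Zd]; field_simp
  rw [heq]
  apply div_nonneg _ (by positivity)
  nlinarith

lemma Zd2le (r : ℝ) (hr : 0 < r) : Zd2 r ≤ 0 := by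
  have hs : 0 < Real.sinh r := Real.sinh_pos_iff.mpr hr
  have heq : Zd2 r = 2*(r^3*Real.cosh r - Real.sinh r^3)/(r^3*Real.sinh r^3) := by
    simp only [Zd2]; field_simp; ring
  rw [heq]
  apply div_nonpos_of_nonpos_of_nonneg _ (by positivity)
  linarith [ineqV hr.le]

lemma Zdle (r : ℝ) (hr : 0 < r) : r * Zd r ≤ Z r := by
  have hs : 0 < Real.sinh r := Real.sinh_pos_iff.mpr hr
  have heq : Z r - r*Zd r =
      (r*Real.cosh r*Real.sinh r + r^2 - 2*Real.sinh r^2)/(r*Real.sinh r^2) := by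
    simp only [Z, Zd]; field_simp; ring
  nlinarith [div_nonneg (by linarith [ineqF hr.le] :
      (0:ℝ) ≤ r*Real.cosh r*Real.sinh r + r^2 - 2*Real.sinh r^2)
      (by positivity : (0:ℝ) ≤ r*Real.sinh r^2), heq]

lemma lemB {r : ℝ} (hr : 0 < r) : r*(Z r)*(Zd2 r) + r*(Zd r)^2 - (Z r)*(Zd r) ≤ 0 := by
  have ha := Zge r hr
  have hb := Zdge r hr
  have hd := Zd2le r hr
  have hab := Zdle r hr
  nlinarith [mul_nonneg (mul_nonneg hr.le ha) (neg_nonneg.mpr hd),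
    mul_nonneg hb (sub_nonneg.mpr hab)]



noncomputable def Fc (t : ℝ) : ℝ → ℝ := fun s => (Real.sqrt s + Z (2*t*Real.sqrt s))^2
noncomputable def Gc (t : ℝ) : ℝ → ℝ := fun s =>
  2*((Real.sqrt s + Z (2*t*Real.sqrt s)) *
    (1/(2*Real.sqrt s) + Zd (2*t*Real.sqrt s) * (2*t*(1/(2*Real.sqrt s)))))

lemma hasDerivAt_inner (t : ℝ) {s : ℝ} (ht : 0 < t) (hs : 0 < s) :
    HasDerivAt (fun y => Real.sqrt y + Z (2*t*Real.sqrt y))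
      (1/(2*Real.sqrt s) + Zd (2*t*Real.sqrt s) * (2*t*(1/(2*Real.sqrt s)))) s := by
  have hsq := Real.hasDerivAt_sqrt hs.ne'
  have hin : HasDerivAt (fun y => 2*t*Real.sqrt y) (2*t*(1/(2*Real.sqrt s))) s :=
    hsq.const_mul (2*t)
  have hzne : 2*t*Real.sqrt s ≠ 0 := by positivity
  have hz := (hasDerivAt_Z hzne).comp s hin
  exact hsq.fun_add hz

lemma hasDerivAt_Fc (t : ℝ) {s : ℝ} (ht : 0 < t) (hs : 0 < s) :
    HasDerivAt (Fc t) (Gc t s) s := by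
  have h := (hasDerivAt_inner t ht hs).fun_pow 2
  refine h.congr_deriv (Eq.symm ?_)
  simp only [Gc]
  push_cast
  ring

lemma hasDerivAt_Gc (t : ℝ) {s : ℝ} (ht : 0 < t) (hs : 0 < s) :
    HasDerivAt (Gc t)
      (2*((1/(2*Real.sqrt s) + Zd (2*t*Real.sqrt s) * (2*t*(1/(2*Real.sqrt s)))) *
          (1/(2*Real.sqrt s) + Zd (2*t*Real.sqrt s) * (2*t*(1/(2*Real.sqrt s)))) +
        (Real.sqrt s + Z (2*t*Real.sqrt s)) *
          ((-(2*(1/(2*Real.sqrt s)))/(2*Real.sqrt s)^2) +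
           (Zd2 (2*t*Real.sqrt s) * (2*t*(1/(2*Real.sqrt s))) * (2*t*(1/(2*Real.sqrt s))) +
            Zd (2*t*Real.sqrt s) * (2*t*(-(2*(1/(2*Real.sqrt s)))/(2*Real.sqrt s)^2)))))) s := by
  have hRne : Real.sqrt s ≠ 0 := by positivity
  have hsq := Real.hasDerivAt_sqrt hs.ne'
  have hin : HasDerivAt (fun y => 2*t*Real.sqrt y) (2*t*(1/(2*Real.sqrt s))) s :=
    hsq.const_mul (2*t)
  have hzne : 2*t*Real.sqrt s ≠ 0 := by positivity
  have hA := hasDerivAt_inner t ht hs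
  have h2s : HasDerivAt (fun y => 2*Real.sqrt y) (2*(1/(2*Real.sqrt s))) s :=
    hsq.const_mul (2:ℝ)
  have h2sne : 2*Real.sqrt s ≠ 0 := by positivity
  have hB1 : HasDerivAt (fun y => 1/(2*Real.sqrt y))
      (-(2*(1/(2*Real.sqrt s)))/(2*Real.sqrt s)^2) s := by
    simpa [one_div] using h2s.fun_inv h2sne
  have hp : HasDerivAt (fun y => Zd (2*t*Real.sqrt y))
      (Zd2 (2*t*Real.sqrt s) * (2*t*(1/(2*Real.sqrt s)))) s :=
    ((hasDerivAt_Zd hzne).comp s hin :)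
  have hq : HasDerivAt (fun y => 2*t*(1/(2*Real.sqrt y)))
      (2*t*(-(2*(1/(2*Real.sqrt s)))/(2*Real.sqrt s)^2)) s := hB1.const_mul (2*t)
  have hB := hB1.fun_add (hp.fun_mul hq)
  have h := (hA.fun_mul hB).const_mul (2:ℝ)
  exact h

theorem stmt_7 (t : ℝ) (ht : 0 < t) (r : ℝ) (hr : 0 < r) :
    deriv (deriv (YofX t)) (-3 / (2 * t) + r ^ 2 / (4 * t ^ 2) - 1) ≤ 0 := by
  have htne : t ≠ 0 := ht.ne'
  have hYeq : YofX t = fun X => Fc t (X + (3/(2*t) + 1)) := by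
    funext X
    simp only [YofX, Fc, add_assoc]
  set s₀ : ℝ := r^2/(4*t^2) with hs₀def
  have hs₀ : 0 < s₀ := by positivity
  have hpt : -3 / (2 * t) + r ^ 2 / (4 * t ^ 2) - 1 + (3/(2*t) + 1) = s₀ := by
    rw [hs₀def]; ring
  have hd1 : deriv (YofX t) = fun X => deriv (Fc t) (X + (3/(2*t) + 1)) := by
    funext X
    rw [hYeq]
    exact deriv_comp_add_const (Fc t) _ X
  have hd2 : deriv (deriv (YofX t)) (-3 / (2 * t) + r ^ 2 / (4 * t ^ 2) - 1)
      = deriv (deriv (Fc t)) s₀ := by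
    rw [hd1, ← hpt]
    exact deriv_comp_add_const (deriv (Fc t)) _ _
  rw [hd2]
  have hev : deriv (Fc t) =ᶠ[nhds s₀] Gc t := by
    filter_upwards [Ioi_mem_nhds hs₀] with s hs using (hasDerivAt_Fc t ht hs).deriv
  rw [hev.deriv_eq, (hasDerivAt_Gc t ht hs₀).deriv]
  have hsqrt : Real.sqrt s₀ = r/(2*t) := by
    rw [hs₀def, show r^2/(4*t^2) = (r/(2*t))^2 by ring]
    exact Real.sqrt_sq (by positivity)
  rw [hsqrt]
  have h2tr : 2*t*(r/(2*t)) = r := by field_simp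
  rw [h2tr]
  have hkey : 2*((1/(2*(r/(2*t))) + Zd r * (2*t*(1/(2*(r/(2*t)))))) *
          (1/(2*(r/(2*t))) + Zd r * (2*t*(1/(2*(r/(2*t)))))) +
        (r/(2*t) + Z r) *
          ((-(2*(1/(2*(r/(2*t)))))/(2*(r/(2*t)))^2) +
           (Zd2 r * (2*t*(1/(2*(r/(2*t))))) * (2*t*(1/(2*(r/(2*t))))) +
            Zd r * (2*t*(-(2*(1/(2*(r/(2*t)))))/(2*(r/(2*t)))^2)))))
      = (4*t^3/r^3)*(r^2*Zd2 r + r*Zd r - Z r)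
        + (8*t^4/r^3)*(r*(Z r)*(Zd2 r) + r*(Zd r)^2 - (Z r)*(Zd r)) := by
    field_simp
    ring
  rw [hkey]
  have hc1 : (0:ℝ) ≤ 4*t^3/r^3 := by positivity
  have hc2 : (0:ℝ) ≤ 8*t^4/r^3 := by positivity
  have := add_nonpos (mul_nonpos_of_nonneg_of_nonpos hc1 (lemA hr))
    (mul_nonpos_of_nonneg_of_nonpos hc2 (lemB hr))
  linarith
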